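/- Let f : {0,1}^n → {0,1} and let i_1, i_2, k be distinct indices such that x_{i_1} is inessential in f_{i_2=k} and x_{i_2} is inessential in f_{i_1=k}. If moreover x_{i_1} is inessential in f_{i_2=i_1}, then x_{i_1} is inessential in f. -/

import Mathlib

open Classical

/-- Boolean functions of arity `n` over GF(2). -/
abbrev BFn (n : ℕ) := (Fin n → ZMod 2) → ZMod 2

/-- Boolean functions of arbitrary arity. -/
abbrev BF := Σ n : ℕ, BFn n

/-- `g` is a simple minor of `f`. -/
def Minor {m n : ℕ} (g : BFn m) (f : BFn n) : Prop :=
  ∃ σ : Fin n → Fin m, ∀ a : Fin m → ZMod 2, g a = f (fun i => a (σ i))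

def MinorS (G F : BF) : Prop := Minor G.2 F.2

def EquivS (G F : BF) : Prop := MinorS G F ∧ MinorS F G

def StrictMinorS (G F : BF) : Prop := MinorS G F ∧ ¬ MinorS F G

/-- `x i` is an essential variable of `f`. -/
def Essential {n : ℕ} (f : BFn n) (i : Fin n) : Prop :=
  ∃ a b : Fin n → ZMod 2, (∀ j, j ≠ i → a j = b j) ∧ f a ≠ f b

noncomputable def essArity {n : ℕ} (f : BFn n) : ℕ :=
  (Finset.univ.filter fun i => Essential f i).card

noncomputable def essS (F : BF) : ℕ := essArity F.2

/-- `f_{i=j}` : identify variable `i` with variable `j`. -/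
def identify {n : ℕ} (f : BFn n) (i j : Fin n) : BFn n :=
  fun a => f (fun t => if t = i then a j else a t)

/-- `G` is a lower cover of `F` in the poset of equivalence classes. -/
def LowerCover (G F : BF) : Prop :=
  StrictMinorS G F ∧ ¬ ∃ H : BF, StrictMinorS G H ∧ StrictMinorS H F

/-- `F` is join-irreducible: some strict minor dominates all strict minors. -/
def JoinIrred (F : BF) : Prop :=
  ∃ F' : BF, StrictMinorS F' F ∧ ∀ G : BF, StrictMinorS G F → MinorS G F'

noncomputable def arityGap (F : BF) : ℕ :=
  sInf {d : ℕ | ∃ G : BF, StrictMinorS G F ∧ d = essS F - essS G}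

/-- Hypergraphs on vertex set `Fin n`. -/
abbrev HG (n : ℕ) := Finset (Finset (Fin n))

abbrev HGS := Σ n : ℕ, HG n

/-- `h` is a quotient map from `(Fin m, E')` to `(Fin n, E)`. -/
def IsQuotientMap {m n : ℕ} (E' : HG m) (E : HG n) (h : Fin m → Fin n) : Prop :=
  ∀ S : Finset (Fin n), S ∈ E ↔ Odd (E'.filter (fun T => T.image h = S)).card

/-- `H ⪯ H'` : there is a quotient map from `H'` to `H`. -/
def MinorH (H H' : HGS) : Prop :=
  ∃ h : Fin H'.1 → Fin H.1, IsQuotientMap H'.2 H.2 h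

/-- The hypergraph `H_{h'}` determined by a hypergraph and a map. -/
noncomputable def quotientHG {m n : ℕ} (E' : HG m) (h : Fin m → Fin n) : HG n :=
  Finset.univ.filter fun S => Odd (E'.filter (fun T => T.image h = S)).card

/-- The Boolean function of a hypergraph: evaluation of `Σ_{E} Π_{i ∈ E} x_i`. -/
def fHG {n : ℕ} (E : HG n) : BFn n :=
  fun a => ∑ S ∈ E, ∏ i ∈ S, a i

/-- A Steiner system (`2-(n,k,1)` design). -/
def IsSteiner {n : ℕ} (k : ℕ) (E : HG n) : Prop :=
  (∀ S ∈ E, S.card = k) ∧ ∀ i j : Fin n, i ≠ j → ∃! S, S ∈ E ∧ i ∈ S ∧ j ∈ S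

/-- Vertex set of the identification hypergraph `H_e`, `e = {i,j}`:
`(V \ e) ∪ {l_e}` where `none` plays the role of the new vertex `l_e`. -/
abbrev IdVert {n : ℕ} (i j : Fin n) := Option {x : Fin n // x ≠ i ∧ x ≠ j}

/-- The underlying subset of `V` of a set of vertices of `H_e` (ignoring `l_e`). -/
def baseSet {n : ℕ} {i j : Fin n} (E : Finset (IdVert i j)) : Finset (Fin n) :=
  E.biUnion fun o => o.elim ∅ fun x => {x.val}

/-- Exactly one or all three of `p`, `q`, `r` hold. -/
def OneOrAllThree (p q r : Prop) : Prop :=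
  (p ∧ ¬q ∧ ¬r) ∨ (¬p ∧ q ∧ ¬r) ∨ (¬p ∧ ¬q ∧ r) ∨ (p ∧ q ∧ r)

/-- The hyperedges of the identification hypergraph `H_e`, `e = {i,j}`. -/
noncomputable def idEdges {n : ℕ} (𝓔 : HG n) (i j : Fin n) :
    Finset (Finset (IdVert i j)) :=
  Finset.univ.filter fun E =>
    (none ∉ E ∧ baseSet E ∈ 𝓔) ∨
    (none ∈ E ∧ OneOrAllThree (insert i (insert j (baseSet E)) ∈ 𝓔)
      (insert i (baseSet E) ∈ 𝓔) (insert j (baseSet E) ∈ 𝓔))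

/-- The hyperedges of the induced hypergraph `H_{-e}` on `V \ e`, `e = {i,j}`. -/
noncomputable def minusEdges {n : ℕ} (𝓔 : HG n) (i j : Fin n) :
    Finset (Finset {x : Fin n // x ≠ i ∧ x ≠ j}) :=
  Finset.univ.filter fun E => E.image Subtype.val ∈ 𝓔

/-- `φ` is an isomorphism of hypergraphs. -/
def IsHGIso {α β : Type*} (𝓐 : Finset (Finset α)) (𝓑 : Finset (Finset β))
    (φ : α ≃ β) : Prop :=
  ∀ E : Finset α, E ∈ 𝓐 ↔ E.image φ ∈ 𝓑

/-- The (loopless) graph associated with a set of 2-element edges. -/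
def graphOf {n : ℕ} (𝓔 : HG n) : SimpleGraph (Fin n) where
  Adj v w := v ≠ w ∧ ({v, w} : Finset (Fin n)) ∈ 𝓔
  symm := by
    refine ⟨fun v w h => ?_⟩
    exact ⟨h.1.symm, by rw [Finset.pair_comm]; exact h.2⟩
  loopless := by
    refine ⟨fun v h => ?_⟩
    exact h.1 rfl
theorem stmt8 {n : ℕ} (f : BFn n) (i1 i2 k : Fin n)
    (h12 : i1 ≠ i2) (h1k : i1 ≠ k) (h2k : i2 ≠ k)
    (h1 : ¬ Essential (identify f i2 k) i1)
    (h2 : ¬ Essential (identify f i1 k) i2)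
    (h3 : ¬ Essential (identify f i2 i1) i1) :
    ¬ Essential f i1 := by
  have hz : ∀ x y : ZMod 2, x ≠ y → x = y + 1 := by decide
  have hz2 : ∀ x : ZMod 2, x + 1 + 1 = x := by decide
  have ne1 : ∀ {g : BFn n} {i : Fin n}, ¬ Essential g i →
      ∀ a b : Fin n → ZMod 2, (∀ j, j ≠ i → a j = b j) → g a = g b := by
    intro g i h a b hab
    by_contra hne
    exact h ⟨a, b, hab, hne⟩
  -- Case A : c i2 = c k
  have caseA : ∀ c : Fin n → ZMod 2, c i2 = c k →
      f c = f (Function.update c i1 (c i1 + 1)) := by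
    intro c hck
    set c' := Function.update c i1 (c i1 + 1) with hc'
    have e1 : identify f i2 k c = f c := by
      show f _ = f c
      congr 1; funext t
      by_cases ht : t = i2
      · simp [ht, hck]
      · simp [ht]
    have e2 : identify f i2 k c' = f c' := by
      show f _ = f c'
      congr 1; funext t
      by_cases ht : t = i2
      · rw [if_pos ht, ht, hc', Function.update_apply, Function.update_apply,
          if_neg (fun h : k = i1 => h1k h.symm), if_neg (Ne.symm h12)]
        exact hck.symm
      · rw [if_neg ht]
    have e3 : identify f i2 k c = identify f i2 k c' := by
      apply ne1 h1
      intro j hj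
      simp [hc', Function.update_apply, hj]
    rw [← e1, e3, e2]
  -- Case B1 : c i2 ≠ c k, c i1 = c k
  have caseB1 : ∀ c : Fin n → ZMod 2, c i2 ≠ c k → c i1 = c k →
      f c = f (Function.update c i1 (c i1 + 1)) := by
    intro c hck h1k'
    set c' := Function.update c i1 (c i1 + 1) with hc'
    set c'' := Function.update c i2 (c k) with hc''
    have step1 : f c = f c'' := by
      have e2 : identify f i1 k c = f c := by
        show f _ = f c
        congr 1; funext t
        by_cases ht : t = i1
        · simp [ht, h1k']
        · simp [ht]
      have e3 : identify f i1 k c'' = f c'' := by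
        show f _ = f c''
        congr 1; funext t
        by_cases ht : t = i1
        · rw [if_pos ht, ht, hc'', Function.update_apply, Function.update_apply,
            if_neg (fun h : k = i2 => h2k h.symm), if_neg h12]
          exact h1k'.symm
        · rw [if_neg ht]
      have e4 : identify f i1 k c = identify f i1 k c'' := by
        apply ne1 h2
        intro j hj
        simp [hc'', Function.update_apply, hj]
      rw [← e2, e4, e3]
    have step2 : f c' = f c'' := by
      have e4 : identify f i2 i1 c' = f c' := by
        show f _ = f c'
        congr 1; funext t
        by_cases ht : t = i2
        · rw [if_pos ht, ht, hc', Function.update_apply, Function.update_apply,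
            if_pos rfl, if_neg (Ne.symm h12), hz _ _ hck, h1k']
        · rw [if_neg ht]
      have e5 : identify f i2 i1 c = f c'' := by
        show f _ = f c''
        congr 1; funext t
        by_cases ht : t = i2
        · rw [if_pos ht, ht, hc'', Function.update_apply, if_pos rfl]
          exact h1k'
        · rw [if_neg ht, hc'', Function.update_apply, if_neg ht]
      have e6 : identify f i2 i1 c' = identify f i2 i1 c := by
        apply ne1 h3
        intro j hj
        simp [hc', Function.update_apply, hj]
      rw [← e4, e6, e5]
    rw [step1, step2]
  -- Key : for all c
  have key : ∀ c : Fin n → ZMod 2, f c = f (Function.update c i1 (c i1 + 1)) := by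
    intro c
    by_cases hck : c i2 = c k
    · exact caseA c hck
    · by_cases h1k' : c i1 = c k
      · exact caseB1 c hck h1k'
      · -- apply B1 to the flipped c
        set c' := Function.update c i1 (c i1 + 1) with hc'
        have hck' : c' i2 = c' k → False := by
          intro h
          apply hck
          rw [hc', Function.update_apply, Function.update_apply,
            if_neg (Ne.symm h12), if_neg (fun hh : k = i1 => h1k hh.symm)] at h
          exact h
        have h1k'' : c' i1 = c' k := by
          rw [hc', Function.update_apply, Function.update_apply, if_pos rfl,
            if_neg (fun hh : k = i1 => h1k hh.symm), hz _ _ h1k', hz2]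
        have := caseB1 c' hck' h1k''
        have hcc : Function.update c' i1 (c' i1 + 1) = c := by
          funext j
          by_cases hj : j = i1
          · subst hj
            simp [hc', Function.update_apply, hz2]
          · simp [hc', Function.update_apply, hj]
        rw [hcc] at this
        exact this.symm
  rintro ⟨a, b, hab, hne⟩
  apply hne
  by_cases hi : a i1 = b i1
  · congr 1
    funext j
    by_cases hj : j = i1
    · subst hj; exact hi
    · exact hab j hj
  · have hb : b = Function.update a i1 (a i1 + 1) := by
      funext j
      by_cases hj : j = i1
      · subst hj
        simp only [Function.update_apply, if_pos rfl]
        exact hz _ _ (Ne.symm hi)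
      · rw [(hab j hj).symm]
        simp [Function.update_apply, hj]
    rw [hb]
    exact key a
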